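/- For all x, y ∈ Ω with x ≠ y and φ(y) ≠ 0, the gradient of γ_Ω in its first variable satisfies conj(∇₁γ_Ω(x,y)) = φ'(x)/(2π·(φ(x) − φ(y))) − 1/(2π·(x − y)) − φ'(x)/(2π·(φ(x) − 1/conj(φ(y)))). -/

import Mathlib

open Complex Real

noncomputable section

/-- The gradient of a real-valued function on `ℂ ≅ ℝ²`, identified with the complex
number `∂₁ f + i·∂₂ f`. -/
def grad (f : ℂ → ℝ) (x : ℂ) : ℂ :=
  (fderiv ℝ f x 1 : ℂ) + (fderiv ℝ f x Complex.I : ℂ) * Complex.I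

/-- The regular part of the Green's function of `Ω`, expressed through the conformal map `φ`. -/
def gammaReg (φ : ℂ → ℂ) (x y : ℂ) : ℝ :=
  (1 / (2 * π)) * Real.log (‖φ x - φ y‖ / ‖x - y‖) -
    (1 / (2 * π)) * Real.log (‖1 - φ x * (starRingEnd ℂ) (φ y)‖)

/-- The Robin function of `Ω`. -/
def robin (φ : ℂ → ℂ) (x : ℂ) : ℝ :=
  (1 / (2 * π)) * Real.log (‖deriv φ x‖) -
    (1 / (2 * π)) * Real.log (1 - ‖φ x‖ ^ 2)

/-- The right-hand side of the Kirchhoff–Routh equation for the vortex located at `w₁`,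
with own strength `a₁`, the other vortex being at `w₂` with strength `a₂`. -/
def vortexRHS (φ : ℂ → ℂ) (a₁ a₂ : ℝ) (w₁ w₂ : ℂ) : ℂ :=
  ((a₁ : ℂ) / 2) * (Complex.I * grad (robin φ) w₁) +
    (a₂ : ℂ) * (Complex.I * (w₁ - w₂) / ((2 * π * ‖w₁ - w₂‖ ^ 2 : ℝ) : ℂ) +
      Complex.I * grad (fun x => gammaReg φ x w₂) w₁)

lemma fderiv_complex_apply {g : ℂ → ℂ} {x : ℂ} (hg : DifferentiableAt ℂ g x) (v : ℂ) :
    (fderiv ℂ g x) v = v * deriv g x := by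
  have : (fderiv ℂ g x) v = (fderiv ℂ g x) (v • 1) := by simp
  rw [this, map_smul]
  rw [smul_eq_mul, fderiv_apply_one_eq_deriv, mul_comm]

lemma hasFDerivAt_normSq (a : ℂ) :
    HasFDerivAt (fun w : ℂ => Complex.normSq w)
      ((2 * a.re) • Complex.reCLM + (2 * a.im) • Complex.imCLM) a := by
  have hre : HasFDerivAt (fun w : ℂ => w.re) (Complex.reCLM : ℂ →L[ℝ] ℝ) a :=
    Complex.reCLM.hasFDerivAt
  have him : HasFDerivAt (fun w : ℂ => w.im) (Complex.imCLM : ℂ →L[ℝ] ℝ) a :=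
    Complex.imCLM.hasFDerivAt
  have h := ((hre.fun_mul hre).fun_add (him.fun_mul him))
  have heq : (fun w : ℂ => w.re * w.re + w.im * w.im) = fun w : ℂ => Complex.normSq w := by
    funext w; simp [Complex.normSq_apply]
  rw [heq] at h
  refine h.congr_fderiv ?_
  ext v <;> simp <;> ring


lemma hasFDerivAt_log_abs {g : ℂ → ℂ} {x : ℂ} (hg : DifferentiableAt ℂ g x)
    (hgx : g x ≠ 0) :
    HasFDerivAt (fun z => Real.log (‖g z‖))
      ((2 : ℝ)⁻¹ • ((Complex.normSq (g x))⁻¹ •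
        (((2 * (g x).re) • Complex.reCLM + (2 * (g x).im) • Complex.imCLM).comp
          ((fderiv ℂ g x).restrictScalars ℝ)))) x := by
  have hgR : HasFDerivAt g ((fderiv ℂ g x).restrictScalars ℝ) x :=
    (hg.hasFDerivAt).restrictScalars ℝ
  have hN := (hasFDerivAt_normSq (g x)).comp x hgR
  have hne : Complex.normSq (g x) ≠ 0 := by
    simpa [Complex.normSq_eq_zero] using hgx
  have hlog := (Real.hasDerivAt_log hne).comp_hasFDerivAt x hN
  have heq : (fun z => Real.log (‖g z‖))
      = fun z => (2 : ℝ)⁻¹ * Real.log (Complex.normSq (g z)) := by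
    funext z
    rw [Complex.norm_def, Real.log_sqrt (Complex.normSq_nonneg _)]
    ring
  rw [heq]
  simpa [smul_smul, mul_comm] using hlog.const_mul ((2:ℝ)⁻¹)

lemma conj_grad_log_abs {g : ℂ → ℂ} {x : ℂ} (hg : DifferentiableAt ℂ g x)
    (hgx : g x ≠ 0) :
    (starRingEnd ℂ) (grad (fun z => Real.log (‖g z‖)) x)
      = deriv g x / g x := by
  have hf := hasFDerivAt_log_abs hg hgx
  have hfd := hf.fderiv
  set a := g x with ha
  set d := deriv g x with hd
  have hne : Complex.normSq a ≠ 0 := by simpa [Complex.normSq_eq_zero] using hgx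
  unfold grad
  rw [hfd]
  have e1 : ((fderiv ℂ g x).restrictScalars ℝ) (1 : ℂ) = d := by
    simp [fderiv_complex_apply hg, hd]
  have eI : ((fderiv ℂ g x).restrictScalars ℝ) (Complex.I) = Complex.I * d := by
    simp [fderiv_complex_apply hg, hd]
  simp only [ContinuousLinearMap.smul_apply, ContinuousLinearMap.comp_apply,
    ContinuousLinearMap.add_apply, e1, eI, Complex.reCLM_apply, Complex.imCLM_apply,
    smul_eq_mul]
  rw [eq_div_iff hgx]
  have hne' : a.im ^ 2 + a.re ^ 2 ≠ 0 := by
    rw [Complex.normSq_apply] at hne; intro h; apply hne; linear_combination h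
  have hS : a.re ^ 2 + a.im ^ 2 ≠ 0 := by
    rw [Complex.normSq_apply] at hne; intro h; apply hne; linear_combination h
  apply Complex.ext <;>
    simp [Complex.normSq_apply, Complex.mul_re, Complex.mul_im] at * <;>
    field_simp <;> ring

lemma grad_combo {u v w : ℂ → ℝ} {c : ℝ} {x : ℂ} (hu : DifferentiableAt ℝ u x)
    (hv : DifferentiableAt ℝ v x) (hw : DifferentiableAt ℝ w x) :
    grad (fun z => c * u z - c * v z - c * w z) x
      = (c : ℂ) * grad u x - (c : ℂ) * grad v x - (c : ℂ) * grad w x := by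
  unfold grad
  have h : fderiv ℝ (fun z => c * u z - c * v z - c * w z) x
      = c • fderiv ℝ u x - c • fderiv ℝ v x - c • fderiv ℝ w x := by
    rw [fderiv_fun_sub ((hu.const_mul c).fun_sub (hv.const_mul c)) (hw.const_mul c),
      fderiv_fun_sub (hu.const_mul c) (hv.const_mul c),
      fderiv_const_mul hu, fderiv_const_mul hv, fderiv_const_mul hw]
  rw [h]
  simp only [ContinuousLinearMap.sub_apply, ContinuousLinearMap.smul_apply, smul_eq_mul]
  push_cast
  ring


/-- **Explicit formula for `∇₁γ_Ω`** (equation (2.2)): for `x ≠ y` in `Ω` with `φ(y) ≠ 0`,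
`conj(∇₁γ_Ω(x,y)) = φ'(x)/(2π(φ(x)−φ(y))) − 1/(2π(x−y)) − φ'(x)/(2π(φ(x)−1/conj(φ(y))))`. -/
theorem stmt5 (Ω : Set ℂ) (φ : ℂ → ℂ)
    (hopen : IsOpen Ω) (hne : Ω ≠ Set.univ) (h0 : (0 : ℂ) ∈ Ω)
    (hconn : IsConnected Ω) (hsc : SimplyConnectedSpace ↥Ω)
    (hdiff : DifferentiableOn ℂ φ Ω)
    (hbij : Set.BijOn φ Ω (Metric.ball 0 1))
    (hφ0 : φ 0 = 0) :
    ∀ x ∈ Ω, ∀ y ∈ Ω, x ≠ y → φ y ≠ 0 →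
      (starRingEnd ℂ) (grad (fun x' => gammaReg φ x' y) x) =
        deriv φ x / (2 * (π : ℂ) * (φ x - φ y)) - 1 / (2 * (π : ℂ) * (x - y)) -
          deriv φ x / (2 * (π : ℂ) * (φ x - 1 / (starRingEnd ℂ) (φ y))) := by
  intro x hx y hy hxy hφy
  set k := (starRingEnd ℂ) (φ y) with hk
  have hπ : (π : ℝ) ≠ 0 := Real.pi_ne_zero
  have hφx : DifferentiableAt ℂ φ x := hdiff.differentiableAt (hopen.mem_nhds hx)
  have hφxy : φ x ≠ φ y := fun h => hxy (hbij.injOn hx hy h)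
  have hax : ‖φ x‖ < 1 := by
    simpa [Complex.dist_eq] using (hbij.mapsTo hx)
  have hay : ‖φ y‖ < 1 := by
    simpa [Complex.dist_eq] using (hbij.mapsTo hy)
  have hkne : k ≠ 0 := by simpa [hk] using hφy
  have h3ne : (1 : ℂ) - φ x * k ≠ 0 := by
    intro h
    have : φ x * k = 1 := by linear_combination -h
    have habs : ‖φ x‖ * ‖φ y‖ = 1 := by
      have := congrArg (‖·‖) this
      simpa [norm_mul, hk, Complex.norm_conj] using this
    nlinarith [norm_nonneg (φ x), norm_nonneg (φ y)]
  have h4ne : φ x - 1 / k ≠ 0 := by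
    intro h
    have hxk : φ x = 1 / k := by linear_combination h
    have habs : ‖φ x‖ = (‖φ y‖)⁻¹ := by
      rw [hxk, one_div, norm_inv, hk, Complex.norm_conj]
    have hpos : (0:ℝ) < ‖φ y‖ := norm_pos_iff.mpr hφy
    have : ‖φ x‖ * ‖φ y‖ = 1 := by
      rw [habs]; field_simp
    nlinarith [norm_nonneg (φ x), norm_nonneg (φ y)]
  -- the three pieces
  have hg1 : DifferentiableAt ℂ (fun z => φ z - φ y) x := hφx.sub_const _
  have hg1x : φ x - φ y ≠ 0 := sub_ne_zero.mpr hφxy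
  have hg2 : DifferentiableAt ℂ (fun z : ℂ => z - y) x := differentiableAt_id.sub_const _
  have hg2x : x - y ≠ 0 := sub_ne_zero.mpr hxy
  have hg3 : DifferentiableAt ℂ (fun z => 1 - φ z * k) x :=
    (differentiableAt_const _).sub (hφx.mul_const _)
  have c1 := conj_grad_log_abs hg1 hg1x
  have c2 := conj_grad_log_abs hg2 hg2x
  have c3 := conj_grad_log_abs hg3 h3ne
  have d1 : DifferentiableAt ℝ (fun z => Real.log (‖φ z - φ y‖)) x :=
    (hasFDerivAt_log_abs hg1 hg1x).differentiableAt
  have d2 : DifferentiableAt ℝ (fun z : ℂ => Real.log (‖z - y‖)) x :=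
    (hasFDerivAt_log_abs hg2 hg2x).differentiableAt
  have d3 : DifferentiableAt ℝ (fun z => Real.log (‖1 - φ z * k‖)) x :=
    (hasFDerivAt_log_abs hg3 h3ne).differentiableAt
  -- eventual equality
  have hev : (fun x' => gammaReg φ x' y) =ᶠ[nhds x]
      (fun z => (1 / (2 * π)) * Real.log (‖φ z - φ y‖)
        - (1 / (2 * π)) * Real.log (‖z - y‖)
        - (1 / (2 * π)) * Real.log (‖1 - φ z * k‖)) := by
    have hUopen : IsOpen ((Ω ∩ φ ⁻¹' {φ y}ᶜ) ∩ {y}ᶜ) :=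
      (hdiff.continuousOn.isOpen_inter_preimage hopen isOpen_compl_singleton).inter
        isOpen_compl_singleton
    have hxU : x ∈ (Ω ∩ φ ⁻¹' {φ y}ᶜ) ∩ {y}ᶜ := ⟨⟨hx, hφxy⟩, hxy⟩
    filter_upwards [hUopen.mem_nhds hxU] with z hz
    obtain ⟨⟨hzΩ, hzφ⟩, hzy⟩ := hz
    have hA : ‖φ z - φ y‖ ≠ 0 := by
      simpa [sub_eq_zero] using (hzφ : φ z ≠ φ y)
    have hB : ‖z - y‖ ≠ 0 := by
      simpa [sub_eq_zero] using (hzy : z ≠ y)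
    unfold gammaReg
    rw [Real.log_div hA hB, ← hk]
    ring
  have hgeq : grad (fun x' => gammaReg φ x' y) x
      = grad (fun z => (1 / (2 * π)) * Real.log (‖φ z - φ y‖)
        - (1 / (2 * π)) * Real.log (‖z - y‖)
        - (1 / (2 * π)) * Real.log (‖1 - φ z * k‖)) x := by
    unfold grad
    rw [hev.fderiv_eq]
  rw [hgeq, grad_combo d1 d2 d3, map_sub, map_sub, map_mul, map_mul, map_mul,
    Complex.conj_ofReal, c1, c2, c3]
  have hd1 : deriv (fun z => φ z - φ y) x = deriv φ x := by
    simp [deriv_sub_const]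
  have hd2 : deriv (fun z : ℂ => z - y) x = 1 := by
    simp [deriv_sub_const]
  have hd3 : deriv (fun z => 1 - φ z * k) x = -(deriv φ x * k) := by
    rw [deriv_const_sub, deriv_mul_const hφx]
  rw [hd1, hd2, hd3]
  have hπC : (π : ℂ) ≠ 0 := Complex.ofReal_ne_zero.mpr hπ
  have h3ne' : φ x * k - 1 ≠ 0 := fun h => h3ne (by linear_combination -h)
  have hrw : φ x - 1 / k = (φ x * k - 1) / k := by field_simp
  have t1 : ((1 / (2 * π) : ℝ) : ℂ) * (deriv φ x / (φ x - φ y))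
      = deriv φ x / (2 * (π : ℂ) * (φ x - φ y)) := by
    push_cast
    field_simp
  have t2 : ((1 / (2 * π) : ℝ) : ℂ) * (1 / (x - y))
      = 1 / (2 * (π : ℂ) * (x - y)) := by
    push_cast
    field_simp
  have t3 : ((1 / (2 * π) : ℝ) : ℂ) * (-(deriv φ x * k) / (1 - φ x * k))
      = deriv φ x / (2 * (π : ℂ) * (φ x - 1 / k)) := by
    have h3k : 1 - k * φ x ≠ 0 := by rwa [mul_comm]
    rw [hrw]
    push_cast
    rw [eq_div_iff (mul_ne_zero (mul_ne_zero two_ne_zero hπC) (div_ne_zero h3ne' hkne))]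
    field_simp
    ring
  linear_combination t1 - t2 - t3
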